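/- Under the setup below, there exist constants 0 < c ≤ C, depending only on the constants in the assumptions, such that c·h^{−d−2[q]} ≤ inf_{x∈𝒳} Ω₀(x) ≤ sup_{x∈𝒳} Ω₀(x) ≤ C·h^{−d−2[q]}, where Ω₀(x) := γ_q(x)'Σ₀γ_q(x), γ_q(x)' := ∂^qp(x)'Q^{−1}, Q := ∫_𝒳 p(x)p(x)'f(x)dx and Σ₀ := ∫_𝒳 p(x)p(x)'σ²(x)f(x)dx. (Lemma SA-4 for the uncorrected estimator, j = 0: two-sided bound on the asymptotic variance function.) -/

import Mathlib

open MeasureTheory Filter Metric Matrix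
open scoped BigOperators ENNReal

noncomputable section

/-- Euclidean space `ℝ^d`. -/
abbrev Euc (d : ℕ) := EuclideanSpace ℝ (Fin d)

/-- Order `[q]` of a multi-index. -/
def mOrder {d : ℕ} (q : Fin d → ℕ) : ℕ := ∑ i, q i

/-- Partial derivative in the `i`-th coordinate direction. -/
noncomputable def lineD {d : ℕ} (i : Fin d) (f : Euc d → ℝ) : Euc d → ℝ :=
  fun x => lineDeriv ℝ f x (EuclideanSpace.single i 1)

/-- Multi-index partial derivative `∂^q f`. -/
noncomputable def mderiv {d : ℕ} (q : Fin d → ℕ) (f : Euc d → ℝ) : Euc d → ℝ :=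
  (List.finRange d).foldr (fun i g => (lineD i)^[q i] g) f

/-- Euclidean norm of a vector in `ℝ^K`. -/
noncomputable def eNorm {K : ℕ} (v : Fin K → ℝ) : ℝ := Real.sqrt (∑ k, v k ^ 2)

/-- Sup-norm of a vector. -/
noncomputable def vSupNorm {K : ℕ} (v : Fin K → ℝ) : ℝ := ⨆ k, |v k|

/-- Quadratic form `v'Av`. -/
def quadForm {ι : Type*} [Fintype ι] (A : Matrix ι ι ℝ) (v : ι → ℝ) : ℝ :=
  ∑ k, ∑ l, v k * A k l * v l

/-- Minimum eigenvalue of a symmetric matrix, as the infimum of its Rayleigh quotient. -/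
noncomputable def lamMin {ι : Type*} [Fintype ι] (A : Matrix ι ι ℝ) : ℝ :=
  sInf {r | ∃ v : ι → ℝ, ∑ k, v k ^ 2 = 1 ∧ r = quadForm A v}

/-- Maximum eigenvalue of a symmetric matrix, as the supremum of its Rayleigh quotient. -/
noncomputable def lamMax {ι : Type*} [Fintype ι] (A : Matrix ι ι ℝ) : ℝ :=
  sSup {r | ∃ v : ι → ℝ, ∑ k, v k ^ 2 = 1 ∧ r = quadForm A v}

/-- Maximum absolute row-sum norm `‖A‖_∞` of a matrix. -/
noncomputable def rowSumNorm {ι : Type*} [Fintype ι] (A : Matrix ι ι ℝ) : ℝ :=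
  ⨆ k, ∑ l, |A k l|

/-- Spectral norm (`ℓ²`-operator norm) of a matrix. -/
noncomputable def specNorm {ι : Type*} [Fintype ι] [DecidableEq ι] (A : Matrix ι ι ℝ) : ℝ :=
  ‖LinearMap.toContinuousLinearMap (Matrix.toEuclideanLin A)‖

/-- Open polyhedron: a finite intersection of open halfspaces. -/
def IsOpenPolyhedron {d : ℕ} (s : Set (Euc d)) : Prop :=
  ∃ (N : ℕ) (a : Fin N → Euc d) (b : Fin N → ℝ),
    s = {x | ∀ i, (inner ℝ (a i) x : ℝ) < b i}

/-! ### Auxiliary lemmas -/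

lemma isOpen_of_polyhedron {d : ℕ} {s : Set (Euc d)} (hs : IsOpenPolyhedron s) : IsOpen s := by
  obtain ⟨N, a, b, rfl⟩ := hs
  have : {x : Euc d | ∀ i, (inner ℝ (a i) x : ℝ) < b i}
      = ⋂ i, {x : Euc d | (inner ℝ (a i) x : ℝ) < b i} := by ext x; simp
  rw [this]
  exact isOpen_iInter_of_finite fun i =>
    isOpen_lt (Continuous.inner continuous_const continuous_id) continuous_const

lemma hyperplane_null {d : ℕ} (a : Euc d) (b : ℝ) (ha : a ≠ 0) :
    volume {x : Euc d | (inner ℝ a x : ℝ) = b} = 0 := by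
  rcases Set.eq_empty_or_nonempty {x : Euc d | (inner ℝ a x : ℝ) = b} with he | ⟨x₀, hx₀⟩
  · rw [he]; exact measure_empty
  · have hker : volume ((LinearMap.ker ((innerSL ℝ a : Euc d →L[ℝ] ℝ) : Euc d →ₗ[ℝ] ℝ) :
        Submodule ℝ (Euc d)) : Set (Euc d)) = 0 := by
      apply Measure.addHaar_submodule
      intro htop
      have : a ∈ LinearMap.ker ((innerSL ℝ a : Euc d →L[ℝ] ℝ) : Euc d →ₗ[ℝ] ℝ) := by
        rw [htop]; trivial
      simp only [LinearMap.mem_ker, ContinuousLinearMap.coe_coe, innerSL_apply_apply] at this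
      exact ha (inner_self_eq_zero.mp this)
    have hset : {x : Euc d | (inner ℝ a x : ℝ) = b}
        = (fun x : Euc d => -x₀ + x) ⁻¹' ((LinearMap.ker ((innerSL ℝ a : Euc d →L[ℝ] ℝ) :
            Euc d →ₗ[ℝ] ℝ) : Submodule ℝ (Euc d)) : Set (Euc d)) := by
      ext x
      simp only [Set.mem_setOf_eq, Set.mem_preimage, SetLike.mem_coe, LinearMap.mem_ker,
        ContinuousLinearMap.coe_coe, innerSL_apply_apply, inner_add_right, inner_neg_right]
      have : (inner ℝ a x₀ : ℝ) = b := hx₀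
      constructor
      · intro hx; rw [hx, this]; ring
      · intro hx; linarith
    rw [hset, measure_preimage_add]
    exact hker

lemma poly_frontier_null {d : ℕ} {s : Set (Euc d)} (hs : IsOpenPolyhedron s) (hne : s.Nonempty) :
    volume (closure s \ s) = 0 := by
  obtain ⟨N, a, b, rfl⟩ := hs
  have hsub : closure {x : Euc d | ∀ i, (inner ℝ (a i) x : ℝ) < b i}
      \ {x : Euc d | ∀ i, (inner ℝ (a i) x : ℝ) < b i}
      ⊆ ⋃ i, {x : Euc d | (inner ℝ (a i) x : ℝ) = b i} := by
    rintro x ⟨hxc, hxn⟩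
    have hclosed : IsClosed {x : Euc d | ∀ i, (inner ℝ (a i) x : ℝ) ≤ b i} := by
      have : {x : Euc d | ∀ i, (inner ℝ (a i) x : ℝ) ≤ b i}
          = ⋂ i, {x : Euc d | (inner ℝ (a i) x : ℝ) ≤ b i} := by ext x; simp
      rw [this]
      exact isClosed_iInter fun i =>
        isClosed_le (Continuous.inner continuous_const continuous_id) continuous_const
    have hle : ∀ i, (inner ℝ (a i) x : ℝ) ≤ b i :=
      closure_minimal
        (fun y (hy : ∀ i, (inner ℝ (a i) y : ℝ) < b i) i => (hy i).le) hclosed hxc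
    simp only [Set.mem_setOf_eq, not_forall, not_lt] at hxn
    obtain ⟨i, hi⟩ := hxn
    exact Set.mem_iUnion.2 ⟨i, le_antisymm (hle i) hi⟩
  refine measure_mono_null hsub (measure_iUnion_null fun i => ?_)
  by_cases hai : a i = 0
  · obtain ⟨y, hy⟩ := hne
    have hb : 0 < b i := by have := hy i; rwa [hai, inner_zero_left] at this
    have : {x : Euc d | (inner ℝ (a i) x : ℝ) = b i} = ∅ := by
      ext x; simp [hai, inner_zero_left, hb.ne]
    rw [this]; exact measure_empty
  · exact hyperplane_null _ _ hai

lemma abs_le_eNorm {K : ℕ} (v : Fin K → ℝ) (k : Fin K) : |v k| ≤ eNorm v := by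
  rw [eNorm, ← Real.sqrt_sq_eq_abs]
  exact Real.sqrt_le_sqrt (Finset.single_le_sum (fun i _ => sq_nonneg (v i)) (Finset.mem_univ k))

lemma quadForm_eq_dot {K : ℕ} (A : Matrix (Fin K) (Fin K) ℝ) (v : Fin K → ℝ) :
    quadForm A v = v ⬝ᵥ A.mulVec v := by
  simp only [quadForm, dotProduct, Matrix.mulVec, Finset.mul_sum, mul_assoc]

lemma quadForm_expand {K : ℕ} (A : Matrix (Fin K) (Fin K) ℝ)
    (hsym : ∀ k l, A k l = A l k) (u w : Fin K → ℝ) (t : ℝ) :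
    quadForm A (fun k => u k + t * w k)
      = quadForm A w * t ^ 2 + (2 * ∑ k, ∑ l, u k * A k l * w l) * t + quadForm A u := by
  have hswap : ∑ k, ∑ l, w k * A k l * u l = ∑ k, ∑ l, u k * A k l * w l := by
    rw [Finset.sum_comm]
    exact Finset.sum_congr rfl fun k _ => Finset.sum_congr rfl fun l _ => by rw [hsym]; ring
  simp only [quadForm]
  have hterm : ∀ k l, (u k + t * w k) * A k l * (u l + t * w l)
      = u k * A k l * u l + t * (u k * A k l * w l) + t * (w k * A k l * u l)
        + t ^ 2 * (w k * A k l * w l) := fun k l => by ring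
  simp_rw [hterm, Finset.sum_add_distrib, ← Finset.mul_sum]
  rw [hswap]; ring

lemma quad_cs {K : ℕ} (A : Matrix (Fin K) (Fin K) ℝ) (hsym : ∀ k l, A k l = A l k)
    (hpos : ∀ v, 0 ≤ quadForm A v) (u w : Fin K → ℝ) :
    (∑ k, ∑ l, u k * A k l * w l) ^ 2 ≤ quadForm A u * quadForm A w := by
  set B := ∑ k, ∑ l, u k * A k l * w l with hB
  have hd := discrim_le_zero (a := quadForm A w) (b := 2 * B) (c := quadForm A u) ?_
  · rw [discrim] at hd; nlinarith [hd]
  · intro t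
    have := hpos (fun k => u k + t * w k)
    rw [quadForm_expand A hsym u w t] at this
    linarith

set_option maxHeartbeats 1000000 in
/-- Lemma SA-4 for the uncorrected estimator, `j = 0`.
Under the quasi-uniform partition and local basis assumptions, there are constants
`0 < c ≤ C`, depending only on the constants of the assumptions, such that
`c·h^{−d−2[q]} ≤ inf_x Ω₀(x) ≤ sup_x Ω₀(x) ≤ C·h^{−d−2[q]}` where
`Ω₀(x) = γ_q(x)'Σ₀γ_q(x)`, `γ_q(x)' = ∂^q p(x)' Q⁻¹`,
`Q = ∫ p p' f` and `Σ₀ = ∫ p p' σ² f`. -/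
theorem statement7 (d m : ℕ) (hd : 1 ≤ d) (q : Fin d → ℕ) (hqm : mOrder q < m)
    (ρqu Cqu f₁ f₂ σ₁ σ₂ c₀ c₁ c₂ : ℝ) (Mb : ℕ)
    (hρqu : 0 < ρqu) (hf₁ : 0 < f₁) (hσ₁ : 0 < σ₁) (hc₀ : 0 < c₀) (hc₁ : 0 < c₁) :
    ∃ c C : ℝ, 0 < c ∧ c ≤ C ∧
      ∀ (𝒳 : Set (Euc d)) (f σsq : Euc d → ℝ) (Δ : Finset (Set (Euc d))) (h : ℝ)
        (K : ℕ) (p : Euc d → Fin K → ℝ),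
        -- domain, density and conditional variance
        IsCompact 𝒳 → IsConnected 𝒳 →
        Measurable f → ContinuousOn f 𝒳 →
        (∀ x ∈ 𝒳, f₁ ≤ f x ∧ f x ≤ f₂) →
        (∫ x in 𝒳, f x) = 1 →
        Measurable σsq → ContinuousOn σsq 𝒳 →
        (∀ x ∈ 𝒳, σ₁ ≤ σsq x ∧ σsq x ≤ σ₂) →
        -- quasi-uniform partition with maximal mesh h
        0 < h →
        (∀ δ ∈ Δ, IsOpenPolyhedron δ) →
        (∀ δ ∈ Δ, δ ⊆ 𝒳) →
        (∀ δ ∈ Δ, ∀ δ' ∈ Δ, δ ≠ δ' → Disjoint δ δ') →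
        (⋃ δ ∈ Δ, closure δ) = 𝒳 →
        (∀ δ ∈ Δ, ∃ z₁ r₁ z₂ r₂, 0 < r₁ ∧ Metric.closedBall z₁ r₁ ⊆ δ ∧
            δ ⊆ Metric.closedBall z₂ r₂ ∧ ρqu * r₂ ≤ r₁) →
        (∀ δ ∈ Δ, ∀ δ' ∈ Δ, Metric.diam δ ≤ Cqu * Metric.diam δ') →
        (∀ δ ∈ Δ, Metric.diam δ ≤ h) →
        (∃ δ ∈ Δ, Metric.diam δ = h) →
        -- local basis assumptions (a), (b), (c)
        1 ≤ K →
        (∀ k : Fin K, Measurable (fun x => p x k)) →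
        (∀ k : Fin K,
          IsConnected (⋃₀ {δ : Set (Euc d) | δ ∈ Δ ∧ ¬ ∀ x ∈ δ, p x k = 0}) ∧
          Set.ncard {δ : Set (Euc d) | δ ∈ Δ ∧ ¬ ∀ x ∈ δ, p x k = 0} ≤ Mb ∧
          Set.ncard {k' : Fin K |
            ¬ ∀ x ∈ ⋃₀ {δ : Set (Euc d) | δ ∈ Δ ∧ ¬ ∀ x ∈ δ, p x k = 0},
              p x k' = 0} ≤ Mb) →
        (∀ (k : Fin K) (a : Fin K → ℝ),
          c₀ * a k ^ 2 * h ^ d ≤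
            ∫ x in ⋃₀ {δ : Set (Euc d) | δ ∈ Δ ∧ ¬ ∀ x ∈ δ, p x k = 0},
              (∑ j, a j * p x j) ^ 2) →
        (∀ δ ∈ Δ, ∀ x ∈ closure δ,
          c₁ / h ^ mOrder q ≤ eNorm (fun k => mderiv q (fun z => p z k) x) ∧
          eNorm (fun k => mderiv q (fun z => p z k) x) ≤ c₂ / h ^ mOrder q) →
        (∀ δ ∈ Δ, ∀ x ∈ closure δ, eNorm (p x) ≤ c₂) →
        -- conclusion: two-sided bound on the asymptotic variance function
        (let Qm : Matrix (Fin K) (Fin K) ℝ := fun k l => ∫ x in 𝒳, p x k * p x l * f x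
        let Sig₀ : Matrix (Fin K) (Fin K) ℝ :=
          fun k l => ∫ x in 𝒳, p x k * p x l * σsq x * f x
        ∀ x ∈ 𝒳,
          c / (h ^ d * h ^ (2 * mOrder q))
              ≤ quadForm Sig₀ (Qm⁻¹.mulVec (fun k => mderiv q (fun z => p z k) x)) ∧
          quadForm Sig₀ (Qm⁻¹.mulVec (fun k => mderiv q (fun z => p z k) x))
              ≤ C / (h ^ d * h ^ (2 * mOrder q))) := by
  classical
  set κd : ℝ := (volume (Metric.ball (0 : Euc d) 1)).toReal with hκd
  have hκpos : 0 < κd := by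
    rw [hκd]
    exact ENNReal.toReal_pos (Metric.measure_ball_pos _ _ one_pos).ne'
      measure_ball_lt_top.ne
  set βv : ℝ := f₂ * (Mb : ℝ) ^ 2 * c₂ ^ 2 * κd with hβv
  set cval : ℝ := σ₁ * c₁ ^ 2 / βv with hcvaldef
  set Cval : ℝ := σ₂ * c₂ ^ 2 * (Mb : ℝ) / (f₁ * c₀) with hCvaldef
  have main : ∀ (𝒳 : Set (Euc d)) (f σsq : Euc d → ℝ) (Δ : Finset (Set (Euc d))) (h : ℝ)
      (K : ℕ) (p : Euc d → Fin K → ℝ),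
      IsCompact 𝒳 → IsConnected 𝒳 →
      Measurable f → ContinuousOn f 𝒳 →
      (∀ x ∈ 𝒳, f₁ ≤ f x ∧ f x ≤ f₂) →
      (∫ x in 𝒳, f x) = 1 →
      Measurable σsq → ContinuousOn σsq 𝒳 →
      (∀ x ∈ 𝒳, σ₁ ≤ σsq x ∧ σsq x ≤ σ₂) →
      0 < h →
      (∀ δ ∈ Δ, IsOpenPolyhedron δ) →
      (∀ δ ∈ Δ, δ ⊆ 𝒳) →
      (∀ δ ∈ Δ, ∀ δ' ∈ Δ, δ ≠ δ' → Disjoint δ δ') →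
      (⋃ δ ∈ Δ, closure δ) = 𝒳 →
      (∀ δ ∈ Δ, ∃ z₁ r₁ z₂ r₂, 0 < r₁ ∧ Metric.closedBall z₁ r₁ ⊆ δ ∧
          δ ⊆ Metric.closedBall z₂ r₂ ∧ ρqu * r₂ ≤ r₁) →
      (∀ δ ∈ Δ, ∀ δ' ∈ Δ, Metric.diam δ ≤ Cqu * Metric.diam δ') →
      (∀ δ ∈ Δ, Metric.diam δ ≤ h) →
      (∃ δ ∈ Δ, Metric.diam δ = h) →
      1 ≤ K →
      (∀ k : Fin K, Measurable (fun x => p x k)) →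
      (∀ k : Fin K,
        IsConnected (⋃₀ {δ : Set (Euc d) | δ ∈ Δ ∧ ¬ ∀ x ∈ δ, p x k = 0}) ∧
        Set.ncard {δ : Set (Euc d) | δ ∈ Δ ∧ ¬ ∀ x ∈ δ, p x k = 0} ≤ Mb ∧
        Set.ncard {k' : Fin K |
          ¬ ∀ x ∈ ⋃₀ {δ : Set (Euc d) | δ ∈ Δ ∧ ¬ ∀ x ∈ δ, p x k = 0},
            p x k' = 0} ≤ Mb) →
      (∀ (k : Fin K) (a : Fin K → ℝ),
        c₀ * a k ^ 2 * h ^ d ≤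
          ∫ x in ⋃₀ {δ : Set (Euc d) | δ ∈ Δ ∧ ¬ ∀ x ∈ δ, p x k = 0},
            (∑ j, a j * p x j) ^ 2) →
      (∀ δ ∈ Δ, ∀ x ∈ closure δ,
        c₁ / h ^ mOrder q ≤ eNorm (fun k => mderiv q (fun z => p z k) x) ∧
        eNorm (fun k => mderiv q (fun z => p z k) x) ≤ c₂ / h ^ mOrder q) →
      (∀ δ ∈ Δ, ∀ x ∈ closure δ, eNorm (p x) ≤ c₂) →
      ((0 < cval ∧ 0 < Cval) ∧
        (let Qm : Matrix (Fin K) (Fin K) ℝ := fun k l => ∫ x in 𝒳, p x k * p x l * f x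
        let Sig₀ : Matrix (Fin K) (Fin K) ℝ :=
          fun k l => ∫ x in 𝒳, p x k * p x l * σsq x * f x
        ∀ x ∈ 𝒳,
          cval / (h ^ d * h ^ (2 * mOrder q))
              ≤ quadForm Sig₀ (Qm⁻¹.mulVec (fun k => mderiv q (fun z => p z k) x)) ∧
          quadForm Sig₀ (Qm⁻¹.mulVec (fun k => mderiv q (fun z => p z k) x))
              ≤ Cval / (h ^ d * h ^ (2 * mOrder q)))) := by
    intro 𝒳 f σsq Δ h K p hXcomp hXconn hfm hfc hfb hfint hσm hσc hσb hh hpoly hsubX hdisj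
      hcover hball hCquh hdiamle hdiamex hK hpm hA hB hC hPB
    -- basic facts
    have hXmeas : MeasurableSet 𝒳 := hXcomp.isClosed.measurableSet
    have hXfin : volume 𝒳 < ⊤ := hXcomp.measure_lt_top
    have hopen : ∀ δ ∈ Δ, IsOpen δ := fun δ hδ => isOpen_of_polyhedron (hpoly δ hδ)
    have hδne : ∀ δ ∈ Δ, Set.Nonempty δ := by
      intro δ hδ
      obtain ⟨z₁, r₁, z₂, r₂, hr₁, hb1, _, _⟩ := hball δ hδ
      exact ⟨z₁, hb1 (Metric.mem_closedBall_self hr₁.le)⟩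
    have hqpow : (0:ℝ) < h ^ mOrder q := pow_pos hh _
    have hdpow : (0:ℝ) < h ^ d := pow_pos hh _
    obtain ⟨δ₀, hδ₀Δ, _⟩ := hdiamex
    obtain ⟨x₀, hx₀δ⟩ := hδne δ₀ hδ₀Δ
    have hx₀X : x₀ ∈ 𝒳 := hsubX δ₀ hδ₀Δ hx₀δ
    have hf₂ : 0 < f₂ := lt_of_lt_of_le hf₁ ((hfb x₀ hx₀X).1.trans (hfb x₀ hx₀X).2)
    have hσ₂ : 0 < σ₂ := lt_of_lt_of_le hσ₁ ((hσb x₀ hx₀X).1.trans (hσb x₀ hx₀X).2)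
    have hc₂ : 0 < c₂ := by
      by_contra hcon
      push_neg at hcon
      have h1 := (hC δ₀ hδ₀Δ x₀ (subset_closure hx₀δ)).1
      have h2 := (hC δ₀ hδ₀Δ x₀ (subset_closure hx₀δ)).2
      have h3 : 0 < c₁ / h ^ mOrder q := div_pos hc₁ hqpow
      have h4 : c₂ / h ^ mOrder q ≤ 0 := div_nonpos_of_nonpos_of_nonneg hcon hqpow.le
      linarith
    have hMb : 1 ≤ Mb := by
      have k0 : Fin K := ⟨0, hK⟩
      obtain ⟨hconn, hn1, -⟩ := hA k0
      obtain ⟨y, δ', hδ', hyδ'⟩ := hconn.nonempty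
      have hfin : ({δ : Set (Euc d) | δ ∈ Δ ∧ ¬ ∀ x ∈ δ, p x k0 = 0}).Finite :=
        Δ.finite_toSet.subset fun δ hδ => hδ.1
      have hpos : 0 < Set.ncard {δ : Set (Euc d) | δ ∈ Δ ∧ ¬ ∀ x ∈ δ, p x k0 = 0} := by
        rw [Set.ncard_pos hfin]
        exact ⟨δ', hδ'⟩
      omega
    have hMbR : (0:ℝ) < (Mb : ℝ) := by exact_mod_cast Nat.lt_of_lt_of_le Nat.zero_lt_one hMb
    have hβpos : 0 < βv := by
      rw [hβv]
      exact mul_pos (mul_pos (mul_pos hf₂ (pow_pos hMbR 2)) (pow_pos hc₂ 2)) hκpos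
    have hmemcl : ∀ x ∈ 𝒳, ∃ δ ∈ Δ, x ∈ closure δ := by
      intro x hx
      rw [← hcover] at hx
      simpa using hx
    have hpabs : ∀ x ∈ 𝒳, ∀ k, |p x k| ≤ c₂ := by
      intro x hx k
      obtain ⟨δ, hδ, hxδ⟩ := hmemcl x hx
      exact (abs_le_eNorm (p x) k).trans (hPB δ hδ x hxδ)
    have habsf : ∀ x ∈ 𝒳, |f x| ≤ f₂ := fun x hx =>
      abs_le.mpr ⟨by linarith [(hfb x hx).1], (hfb x hx).2⟩
    have habsσ : ∀ x ∈ 𝒳, |σsq x| ≤ σ₂ := fun x hx =>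
      abs_le.mpr ⟨by linarith [(hσb x hx).1], (hσb x hx).2⟩
    -- integrability toolkit
    have hint : ∀ (F : Euc d → ℝ) (Bd : ℝ), Measurable F → (∀ x ∈ 𝒳, |F x| ≤ Bd) →
        IntegrableOn F 𝒳 := by
      intro F Bd hFm hFb
      have : IsFiniteMeasure (volume.restrict 𝒳) :=
        ⟨by rw [Measure.restrict_apply_univ]; exact hXfin⟩
      refine ⟨hFm.aestronglyMeasurable, ?_⟩
      apply HasFiniteIntegral.of_bounded (C := Bd)
      rw [ae_restrict_iff' hXmeas]
      exact ae_of_all _ fun x hx => by rw [Real.norm_eq_abs]; exact hFb x hx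
    have hgm : ∀ a : Fin K → ℝ, Measurable (fun x => (∑ j, a j * p x j) ^ 2) := fun a =>
      (Finset.measurable_sum Finset.univ fun j _ => measurable_const.mul (hpm j)).pow_const 2
    have hgnn : ∀ (a : Fin K → ℝ) (x : Euc d), (0:ℝ) ≤ (∑ j, a j * p x j) ^ 2 :=
      fun a x => sq_nonneg _
    have hgb : ∀ (a : Fin K → ℝ), ∀ x ∈ 𝒳, |(∑ j, a j * p x j) ^ 2| ≤ (∑ j, |a j| * c₂) ^ 2 := by
      intro a x hx
      rw [abs_of_nonneg (hgnn a x)]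
      have h1 : |∑ j, a j * p x j| ≤ ∑ j, |a j| * c₂ := by
        refine (Finset.abs_sum_le_sum_abs _ _).trans (Finset.sum_le_sum fun j _ => ?_)
        rw [abs_mul]
        exact mul_le_mul_of_nonneg_left (hpabs x hx j) (abs_nonneg _)
      calc (∑ j, a j * p x j) ^ 2 = |∑ j, a j * p x j| ^ 2 := (sq_abs _).symm
        _ ≤ (∑ j, |a j| * c₂) ^ 2 := pow_le_pow_left₀ (abs_nonneg _) h1 2
    have hgint : ∀ a : Fin K → ℝ, IntegrableOn (fun x => (∑ j, a j * p x j) ^ 2) 𝒳 :=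
      fun a => hint _ _ (hgm a) (hgb a)
    have hgfint : ∀ a : Fin K → ℝ, IntegrableOn (fun x => (∑ j, a j * p x j) ^ 2 * f x) 𝒳 := by
      intro a
      refine hint _ ((∑ j, |a j| * c₂) ^ 2 * f₂) ((hgm a).mul hfm) fun x hx => ?_
      rw [abs_mul]
      exact mul_le_mul (hgb a x hx) (habsf x hx) (abs_nonneg _) (sq_nonneg _)
    have hgσfint : ∀ a : Fin K → ℝ,
        IntegrableOn (fun x => (∑ j, a j * p x j) ^ 2 * σsq x * f x) 𝒳 := by
      intro a
      refine hint _ ((∑ j, |a j| * c₂) ^ 2 * σ₂ * f₂) (((hgm a).mul hσm).mul hfm) fun x hx => ?_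
      rw [abs_mul, abs_mul]
      refine mul_le_mul (mul_le_mul (hgb a x hx) (habsσ x hx) (abs_nonneg _) (sq_nonneg _))
        (habsf x hx) (abs_nonneg _) ?_
      positivity
    have hpplint : ∀ k l : Fin K, IntegrableOn (fun x => p x k * p x l * f x) 𝒳 := by
      intro k l
      refine hint _ (c₂ * c₂ * f₂) (((hpm k).mul (hpm l)).mul hfm) fun x hx => ?_
      rw [abs_mul, abs_mul]
      refine mul_le_mul (mul_le_mul (hpabs x hx k) (hpabs x hx l) (abs_nonneg _) hc₂.le)
        (habsf x hx) (abs_nonneg _) ?_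
      positivity
    have hpplσint : ∀ k l : Fin K, IntegrableOn (fun x => p x k * p x l * σsq x * f x) 𝒳 := by
      intro k l
      refine hint _ (c₂ * c₂ * σ₂ * f₂) ((((hpm k).mul (hpm l)).mul hσm).mul hfm) fun x hx => ?_
      rw [abs_mul, abs_mul, abs_mul]
      refine mul_le_mul (mul_le_mul
        (mul_le_mul (hpabs x hx k) (hpabs x hx l) (abs_nonneg _) hc₂.le)
        (habsσ x hx) (abs_nonneg _) (by positivity)) (habsf x hx) (abs_nonneg _) (by positivity)
    -- the matrices
    set Qm : Matrix (Fin K) (Fin K) ℝ := fun k l => ∫ x in 𝒳, p x k * p x l * f x with hQm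
    set Sg : Matrix (Fin K) (Fin K) ℝ := fun k l => ∫ x in 𝒳, p x k * p x l * σsq x * f x
      with hSg
    -- quadratic-form integral representations
    have hquadQ : ∀ a : Fin K → ℝ,
        quadForm Qm a = ∫ x in 𝒳, (∑ j, a j * p x j) ^ 2 * f x := by
      intro a
      have e1 : ∀ k l : Fin K,
          a k * Qm k l * a l = ∫ x in 𝒳, a k * (p x k * p x l * f x) * a l := by
        intro k l
        simp only [hQm]
        rw [← integral_const_mul, ← integral_mul_const]
      calc quadForm Qm a = ∑ k, ∑ l, ∫ x in 𝒳, a k * (p x k * p x l * f x) * a l := by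
            rw [quadForm]
            exact Finset.sum_congr rfl fun k _ => Finset.sum_congr rfl fun l _ => e1 k l
        _ = ∫ x in 𝒳, ∑ k, ∑ l, a k * (p x k * p x l * f x) * a l := by
            rw [integral_finset_sum _ (fun k _ => integrable_finset_sum _
              (fun l _ => ((hpplint k l).const_mul (a k)).mul_const (a l)))]
            exact Finset.sum_congr rfl fun k _ => (integral_finset_sum _
              (fun l _ => ((hpplint k l).const_mul (a k)).mul_const (a l))).symm
        _ = ∫ x in 𝒳, (∑ j, a j * p x j) ^ 2 * f x := by
            refine integral_congr_ae (ae_of_all _ fun x => ?_)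
            show (∑ k, ∑ l, a k * (p x k * p x l * f x) * a l) = (∑ j, a j * p x j) ^ 2 * f x
            rw [pow_two, Finset.sum_mul_sum, Finset.sum_mul]
            exact Finset.sum_congr rfl fun k _ => by
              rw [Finset.sum_mul]
              exact Finset.sum_congr rfl fun l _ => by ring
    have hquadS : ∀ a : Fin K → ℝ,
        quadForm Sg a = ∫ x in 𝒳, (∑ j, a j * p x j) ^ 2 * σsq x * f x := by
      intro a
      have e1 : ∀ k l : Fin K,
          a k * Sg k l * a l = ∫ x in 𝒳, a k * (p x k * p x l * σsq x * f x) * a l := by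
        intro k l
        simp only [hSg]
        rw [← integral_const_mul, ← integral_mul_const]
      calc quadForm Sg a = ∑ k, ∑ l, ∫ x in 𝒳, a k * (p x k * p x l * σsq x * f x) * a l := by
            rw [quadForm]
            exact Finset.sum_congr rfl fun k _ => Finset.sum_congr rfl fun l _ => e1 k l
        _ = ∫ x in 𝒳, ∑ k, ∑ l, a k * (p x k * p x l * σsq x * f x) * a l := by
            rw [integral_finset_sum _ (fun k _ => integrable_finset_sum _
              (fun l _ => ((hpplσint k l).const_mul (a k)).mul_const (a l)))]
            exact Finset.sum_congr rfl fun k _ => (integral_finset_sum _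
              (fun l _ => ((hpplσint k l).const_mul (a k)).mul_const (a l))).symm
        _ = ∫ x in 𝒳, (∑ j, a j * p x j) ^ 2 * σsq x * f x := by
            refine integral_congr_ae (ae_of_all _ fun x => ?_)
            show (∑ k, ∑ l, a k * (p x k * p x l * σsq x * f x) * a l)
                = (∑ j, a j * p x j) ^ 2 * σsq x * f x
            rw [pow_two, Finset.sum_mul_sum, Finset.sum_mul, Finset.sum_mul]
            exact Finset.sum_congr rfl fun k _ => by
              rw [Finset.sum_mul, Finset.sum_mul]
              exact Finset.sum_congr rfl fun l _ => by ring
    have hQsym : ∀ k l, Qm k l = Qm l k := by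
      intro k l
      simp only [hQm]
      exact integral_congr_ae (ae_of_all _ fun x => by ring)
    -- measurability of the supports
    have hHmeas : ∀ k : Fin K,
        MeasurableSet (⋃₀ {δ : Set (Euc d) | δ ∈ Δ ∧ ¬ ∀ x ∈ δ, p x k = 0}) := by
      intro k
      exact MeasurableSet.sUnion ((Δ.finite_toSet.subset fun δ hδ => hδ.1).countable)
        fun t ht => (hopen t ht.1).measurableSet
    have hHsub : ∀ k : Fin K, ⋃₀ {δ : Set (Euc d) | δ ∈ Δ ∧ ¬ ∀ x ∈ δ, p x k = 0} ⊆ 𝒳 :=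
      fun k => Set.sUnion_subset fun t ht => hsubX t ht.1
    have hlow : ∀ a : Fin K → ℝ,
        f₁ * (c₀ * h ^ d * ∑ k, a k ^ 2) ≤ (Mb : ℝ) * quadForm Qm a := by
      intro a
      have step1 : c₀ * h ^ d * ∑ k, a k ^ 2 ≤
          ∑ k, ∫ x in ⋃₀ {δ : Set (Euc d) | δ ∈ Δ ∧ ¬ ∀ x ∈ δ, p x k = 0},
            (∑ j, a j * p x j) ^ 2 := by
        rw [Finset.mul_sum]
        refine Finset.sum_le_sum fun k _ => ?_
        calc c₀ * h ^ d * a k ^ 2 = c₀ * a k ^ 2 * h ^ d := by ring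
          _ ≤ _ := hB k a
      have step2 : ∑ k, ∫ x in ⋃₀ {δ : Set (Euc d) | δ ∈ Δ ∧ ¬ ∀ x ∈ δ, p x k = 0},
            (∑ j, a j * p x j) ^ 2
          ≤ (Mb : ℝ) * ∫ x in 𝒳, (∑ j, a j * p x j) ^ 2 := by
        have hIk : ∀ k : Fin K, IntegrableOn (fun x => (∑ j, a j * p x j) ^ 2)
            (⋃₀ {δ : Set (Euc d) | δ ∈ Δ ∧ ¬ ∀ x ∈ δ, p x k = 0}) :=
          fun k => (hgint a).mono_set (hHsub k)
        have hind : ∀ k : Fin K, Integrable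
            ((⋃₀ {δ : Set (Euc d) | δ ∈ Δ ∧ ¬ ∀ x ∈ δ, p x k = 0}).indicator
              (fun x => (∑ j, a j * p x j) ^ 2)) volume :=
          fun k => (integrable_indicator_iff (hHmeas k)).mpr (hIk k)
        have hXind : Integrable (𝒳.indicator (fun x => (∑ j, a j * p x j) ^ 2)) volume :=
          (integrable_indicator_iff hXmeas).mpr (hgint a)
        calc ∑ k, ∫ x in ⋃₀ {δ : Set (Euc d) | δ ∈ Δ ∧ ¬ ∀ x ∈ δ, p x k = 0},
              (∑ j, a j * p x j) ^ 2
            = ∑ k : Fin K, ∫ x, (⋃₀ {δ : Set (Euc d) | δ ∈ Δ ∧ ¬ ∀ x ∈ δ, p x k = 0}).indicator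
                (fun x => (∑ j, a j * p x j) ^ 2) x :=
              Finset.sum_congr rfl fun k _ => (integral_indicator (hHmeas k)).symm
          _ = ∫ x, ∑ k : Fin K, (⋃₀ {δ : Set (Euc d) | δ ∈ Δ ∧ ¬ ∀ x ∈ δ, p x k = 0}).indicator
                (fun x => (∑ j, a j * p x j) ^ 2) x :=
              (integral_finset_sum _ fun k _ => hind k).symm
          _ ≤ ∫ x, (Mb : ℝ) * 𝒳.indicator (fun x => (∑ j, a j * p x j) ^ 2) x := by
              refine integral_mono (integrable_finset_sum _ fun k _ => hind k)
                (hXind.const_mul _) ?_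
              intro x
              beta_reduce
              by_cases hxH : ∃ k : Fin K,
                x ∈ ⋃₀ {δ : Set (Euc d) | δ ∈ Δ ∧ ¬ ∀ x ∈ δ, p x k = 0}
              · obtain ⟨k₀, hk₀⟩ := hxH
                have hxX : x ∈ 𝒳 := hHsub k₀ hk₀
                have hsum : ∑ k : Fin K,
                    (⋃₀ {δ : Set (Euc d) | δ ∈ Δ ∧ ¬ ∀ x ∈ δ, p x k = 0}).indicator
                      (fun x => (∑ j, a j * p x j) ^ 2) x
                    = ((Finset.univ.filter (fun k : Fin K =>
                        x ∈ ⋃₀ {δ : Set (Euc d) | δ ∈ Δ ∧ ¬ ∀ x ∈ δ, p x k = 0})).card : ℝ)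
                      * (∑ j, a j * p x j) ^ 2 := by
                  simp only [Set.indicator_apply]
                  rw [Finset.sum_ite, Finset.sum_const, Finset.sum_const_zero, add_zero,
                    nsmul_eq_mul]
                have hcard : (Finset.univ.filter (fun k : Fin K =>
                    x ∈ ⋃₀ {δ : Set (Euc d) | δ ∈ Δ ∧ ¬ ∀ x ∈ δ, p x k = 0})).card ≤ Mb := by
                  obtain ⟨δ', ⟨hδ'Δ, hδ'p⟩, hxδ'⟩ := hk₀
                  have hsubs : ↑(Finset.univ.filter (fun k : Fin K =>
                      x ∈ ⋃₀ {δ : Set (Euc d) | δ ∈ Δ ∧ ¬ ∀ x ∈ δ, p x k = 0}))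
                      ⊆ {k' : Fin K | ¬ ∀ y ∈ ⋃₀ {δ : Set (Euc d) | δ ∈ Δ ∧
                          ¬ ∀ x ∈ δ, p x k₀ = 0}, p y k' = 0} := by
                    intro k hk
                    simp only [Finset.coe_filter, Finset.mem_univ, true_and,
                      Set.mem_setOf_eq] at hk
                    obtain ⟨δ'', ⟨hδ''Δ, hδ''p⟩, hxδ''⟩ := hk
                    have hδeq : δ'' = δ' := by
                      by_contra hne
                      exact Set.disjoint_left.mp (hdisj δ'' hδ''Δ δ' hδ'Δ hne) hxδ'' hxδ'
                    subst hδeq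
                    intro hall
                    apply hδ''p
                    intro y hy
                    exact hall y ⟨δ'', ⟨hδ''Δ, hδ'p⟩, hy⟩
                  calc (Finset.univ.filter (fun k : Fin K =>
                          x ∈ ⋃₀ {δ : Set (Euc d) | δ ∈ Δ ∧ ¬ ∀ x ∈ δ, p x k = 0})).card
                      = (↑(Finset.univ.filter (fun k : Fin K =>
                          x ∈ ⋃₀ {δ : Set (Euc d) | δ ∈ Δ ∧ ¬ ∀ x ∈ δ, p x k = 0})) :
                            Set (Fin K)).ncard := (Set.ncard_coe_finset _).symm
                    _ ≤ Set.ncard {k' : Fin K | ¬ ∀ y ∈ ⋃₀ {δ : Set (Euc d) | δ ∈ Δ ∧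
                          ¬ ∀ x ∈ δ, p x k₀ = 0}, p y k' = 0} :=
                        Set.ncard_le_ncard hsubs (Set.toFinite _)
                    _ ≤ Mb := (hA k₀).2.2
                rw [hsum, Set.indicator_of_mem hxX]
                exact mul_le_mul_of_nonneg_right (by exact_mod_cast hcard) (hgnn a x)
              · have hxH' : ∀ k : Fin K,
                    x ∉ ⋃₀ {δ : Set (Euc d) | δ ∈ Δ ∧ ¬ ∀ x ∈ δ, p x k = 0} :=
                  fun k hk => hxH ⟨k, hk⟩
                have hz : ∑ k : Fin K,
                    (⋃₀ {δ : Set (Euc d) | δ ∈ Δ ∧ ¬ ∀ x ∈ δ, p x k = 0}).indicator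
                      (fun x => (∑ j, a j * p x j) ^ 2) x = 0 :=
                  Finset.sum_eq_zero fun k _ => Set.indicator_of_notMem (hxH' k) _
                rw [hz]
                exact mul_nonneg (Nat.cast_nonneg _)
                  (Set.indicator_nonneg (fun y _ => hgnn a y) x)
          _ = (Mb : ℝ) * ∫ x in 𝒳, (∑ j, a j * p x j) ^ 2 := by
              rw [integral_const_mul, integral_indicator hXmeas]
      have step3 : f₁ * ∫ x in 𝒳, (∑ j, a j * p x j) ^ 2 ≤ quadForm Qm a := by
        rw [hquadQ a, ← integral_const_mul]
        refine setIntegral_mono_on ((hgint a).const_mul f₁) (hgfint a) hXmeas ?_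
        intro x hx
        rw [mul_comm f₁]
        exact mul_le_mul_of_nonneg_left (hfb x hx).1 (hgnn a x)
      calc f₁ * (c₀ * h ^ d * ∑ k, a k ^ 2)
          ≤ f₁ * ∑ k, ∫ x in ⋃₀ {δ : Set (Euc d) | δ ∈ Δ ∧ ¬ ∀ x ∈ δ, p x k = 0},
              (∑ j, a j * p x j) ^ 2 := mul_le_mul_of_nonneg_left step1 hf₁.le
        _ ≤ f₁ * ((Mb : ℝ) * ∫ x in 𝒳, (∑ j, a j * p x j) ^ 2) :=
            mul_le_mul_of_nonneg_left step2 hf₁.le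
        _ = (Mb : ℝ) * (f₁ * ∫ x in 𝒳, (∑ j, a j * p x j) ^ 2) := by ring
        _ ≤ (Mb : ℝ) * quadForm Qm a := mul_le_mul_of_nonneg_left step3 (Nat.cast_nonneg _)
    have hquadnn : ∀ a : Fin K → ℝ, 0 ≤ quadForm Qm a := by
      intro a
      have h1 := hlow a
      have h0 : 0 ≤ f₁ * (c₀ * h ^ d * ∑ k, a k ^ 2) := by
        refine mul_nonneg hf₁.le (mul_nonneg (mul_nonneg hc₀.le hdpow.le) ?_)
        exact Finset.sum_nonneg fun k _ => sq_nonneg _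
      nlinarith
    -- decomposition of the integral over the cells
    have hUeq : ∀ a : Fin K → ℝ,
        ∫ x in 𝒳, (∑ j, a j * p x j) ^ 2 = ∑ δ ∈ Δ, ∫ x in δ, (∑ j, a j * p x j) ^ 2 := by
      intro a
      have hUsub : (⋃ δ ∈ Δ, (δ : Set (Euc d))) ⊆ 𝒳 := by
        intro y hy
        simp only [Set.mem_iUnion] at hy
        obtain ⟨δ, hδ, hyδ⟩ := hy
        exact hsubX δ hδ hyδ
      have hUnull : volume (𝒳 \ ⋃ δ ∈ Δ, (δ : Set (Euc d))) = 0 := by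
        have hsub2 : 𝒳 \ (⋃ δ ∈ Δ, (δ : Set (Euc d))) ⊆ ⋃ δ ∈ Δ, (closure δ \ δ) := by
          rintro y ⟨hy1, hy2⟩
          rw [← hcover] at hy1
          simp only [Set.mem_iUnion] at hy1 ⊢
          obtain ⟨δ, hδ, hycl⟩ := hy1
          refine ⟨δ, hδ, hycl, fun hyδ => hy2 ?_⟩
          simp only [Set.mem_iUnion]
          exact ⟨δ, hδ, hyδ⟩
        refine measure_mono_null hsub2 (le_antisymm ?_ zero_le)
        calc volume (⋃ δ ∈ Δ, (closure δ \ δ)) ≤ ∑ δ ∈ Δ, volume (closure δ \ δ) :=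
              measure_biUnion_finset_le Δ _
          _ = 0 := Finset.sum_eq_zero fun δ hδ =>
              poly_frontier_null (hpoly δ hδ) (hδne δ hδ)
      have hae : 𝒳 =ᵐ[volume] (⋃ δ ∈ Δ, (δ : Set (Euc d))) := by
        rw [MeasureTheory.ae_eq_set]
        refine ⟨hUnull, ?_⟩
        rw [Set.diff_eq_empty.mpr hUsub]
        exact measure_empty
      rw [setIntegral_congr_set hae]
      exact integral_biUnion_finset Δ (fun δ hδ => (hopen δ hδ).measurableSet)
        (fun δ hδ δ' hδ' hne => hdisj δ hδ δ' hδ' hne)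
        (fun δ hδ => (hgint a).mono_set (hsubX δ hδ))
    have hScard : ∀ δ ∈ Δ,
        (Finset.univ.filter (fun j : Fin K => ¬ ∀ x ∈ δ, p x j = 0)).card ≤ Mb := by
      intro δ hδ
      rcases Finset.eq_empty_or_nonempty
        (Finset.univ.filter (fun j : Fin K => ¬ ∀ x ∈ δ, p x j = 0)) with he | ⟨k₀, hk₀⟩
      · rw [he, Finset.card_empty]; exact Nat.zero_le _
      · have hk₀' : ¬ ∀ x ∈ δ, p x k₀ = 0 := by
          simpa using (Finset.mem_filter.mp hk₀).2
        have hsubs : (↑(Finset.univ.filter (fun j : Fin K => ¬ ∀ x ∈ δ, p x j = 0)) :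
            Set (Fin K)) ⊆ {k' : Fin K | ¬ ∀ y ∈ ⋃₀ {δ' : Set (Euc d) | δ' ∈ Δ ∧
              ¬ ∀ x ∈ δ', p x k₀ = 0}, p y k' = 0} := by
          intro j hj
          simp only [Finset.coe_filter, Finset.mem_univ, true_and, Set.mem_setOf_eq] at hj
          intro hall
          apply hj
          intro y hy
          exact hall y ⟨δ, ⟨hδ, hk₀'⟩, hy⟩
        calc (Finset.univ.filter (fun j : Fin K => ¬ ∀ x ∈ δ, p x j = 0)).card
            = (↑(Finset.univ.filter (fun j : Fin K => ¬ ∀ x ∈ δ, p x j = 0)) :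
                Set (Fin K)).ncard := (Set.ncard_coe_finset _).symm
          _ ≤ Set.ncard {k' : Fin K | ¬ ∀ y ∈ ⋃₀ {δ' : Set (Euc d) | δ' ∈ Δ ∧
                ¬ ∀ x ∈ δ', p x k₀ = 0}, p y k' = 0} :=
              Set.ncard_le_ncard hsubs (Set.toFinite _)
          _ ≤ Mb := (hA k₀).2.2
    have hcellvol : ∀ δ ∈ Δ, (volume δ).toReal ≤ κd * h ^ d := by
      intro δ hδ
      obtain ⟨y₀, hy₀⟩ := hδne δ hδ
      have hsubB : δ ⊆ Metric.closedBall y₀ h := by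
        intro y hy
        rw [Metric.mem_closedBall]
        exact (Metric.dist_le_diam_of_mem ((hXcomp.isBounded).subset (hsubX δ hδ)) hy hy₀).trans
          (hdiamle δ hδ)
      have h2 : volume (Metric.closedBall y₀ h)
          = ENNReal.ofReal (h ^ d) * volume (Metric.ball (0 : Euc d) 1) := by
        rw [Measure.addHaar_closedBall _ _ hh.le, finrank_euclideanSpace_fin]
      calc (volume δ).toReal ≤ (volume (Metric.closedBall y₀ h)).toReal :=
            ENNReal.toReal_mono measure_closedBall_lt_top.ne (measure_mono hsubB)
        _ = h ^ d * κd := by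
            rw [h2, ENNReal.toReal_mul, ENNReal.toReal_ofReal (by positivity), hκd]
        _ = κd * h ^ d := mul_comm _ _
    have hcellint : ∀ a : Fin K → ℝ, ∀ δ ∈ Δ, ∫ x in δ, (∑ j, a j * p x j) ^ 2
        ≤ (Mb : ℝ) * c₂ ^ 2 * (∑ j ∈ Finset.univ.filter (fun j : Fin K =>
            ¬ ∀ x ∈ δ, p x j = 0), a j ^ 2) * (κd * h ^ d) := by
      intro a δ hδ
      have hptwise : ∀ x ∈ δ, (∑ j, a j * p x j) ^ 2
          ≤ (Mb : ℝ) * c₂ ^ 2 * ∑ j ∈ Finset.univ.filter (fun j : Fin K =>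
              ¬ ∀ x ∈ δ, p x j = 0), a j ^ 2 := by
        intro x hxδ
        have hxX : x ∈ 𝒳 := hsubX δ hδ hxδ
        have hsumeq : (∑ j, a j * p x j)
            = ∑ j ∈ Finset.univ.filter (fun j : Fin K => ¬ ∀ x ∈ δ, p x j = 0),
                a j * p x j := by
          refine (Finset.sum_subset (Finset.filter_subset _ _) ?_).symm
          intro j _ hj
          simp only [Finset.mem_filter, Finset.mem_univ, true_and, not_not] at hj
          rw [hj x hxδ, mul_zero]
        have hcs := Finset.sum_mul_sq_le_sq_mul_sq
          (Finset.univ.filter (fun j : Fin K => ¬ ∀ x ∈ δ, p x j = 0)) a (fun j => p x j)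
        have hp2 : ∑ j ∈ Finset.univ.filter (fun j : Fin K => ¬ ∀ x ∈ δ, p x j = 0),
            (p x j) ^ 2 ≤ (Mb : ℝ) * c₂ ^ 2 := by
          calc ∑ j ∈ Finset.univ.filter (fun j : Fin K => ¬ ∀ x ∈ δ, p x j = 0), (p x j) ^ 2
              ≤ ∑ _j ∈ Finset.univ.filter (fun j : Fin K => ¬ ∀ x ∈ δ, p x j = 0), c₂ ^ 2 := by
                refine Finset.sum_le_sum fun j _ => ?_
                rw [← sq_abs]
                exact pow_le_pow_left₀ (abs_nonneg _) (hpabs x hxX j) 2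
            _ = ((Finset.univ.filter (fun j : Fin K => ¬ ∀ x ∈ δ, p x j = 0)).card : ℝ)
                  * c₂ ^ 2 := by rw [Finset.sum_const, nsmul_eq_mul]
            _ ≤ (Mb : ℝ) * c₂ ^ 2 :=
                mul_le_mul_of_nonneg_right (by exact_mod_cast hScard δ hδ) (sq_nonneg _)
        calc (∑ j, a j * p x j) ^ 2
            = (∑ j ∈ Finset.univ.filter (fun j : Fin K => ¬ ∀ x ∈ δ, p x j = 0),
                a j * p x j) ^ 2 := by rw [hsumeq]
          _ ≤ (∑ j ∈ Finset.univ.filter (fun j : Fin K => ¬ ∀ x ∈ δ, p x j = 0), a j ^ 2)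
                * ∑ j ∈ Finset.univ.filter (fun j : Fin K => ¬ ∀ x ∈ δ, p x j = 0),
                    (p x j) ^ 2 := hcs
          _ ≤ (∑ j ∈ Finset.univ.filter (fun j : Fin K => ¬ ∀ x ∈ δ, p x j = 0), a j ^ 2)
                * ((Mb : ℝ) * c₂ ^ 2) := by
              refine mul_le_mul_of_nonneg_left hp2 ?_
              exact Finset.sum_nonneg fun j _ => sq_nonneg _
          _ = (Mb : ℝ) * c₂ ^ 2 * ∑ j ∈ Finset.univ.filter (fun j : Fin K =>
                ¬ ∀ x ∈ δ, p x j = 0), a j ^ 2 := by ring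
      have hδmeas := (hopen δ hδ).measurableSet
      have hδfin : volume δ < ⊤ := lt_of_le_of_lt (measure_mono (hsubX δ hδ)) hXfin
      have s1 : ∫ x in δ, (∑ j, a j * p x j) ^ 2
          ≤ ∫ _x in δ, (Mb : ℝ) * c₂ ^ 2 * ∑ j ∈ Finset.univ.filter (fun j : Fin K =>
              ¬ ∀ x ∈ δ, p x j = 0), a j ^ 2 :=
        setIntegral_mono_on ((hgint a).mono_set (hsubX δ hδ))
          (integrableOn_const hδfin.ne) hδmeas hptwise
      have s2 : ∫ _x in δ, (Mb : ℝ) * c₂ ^ 2 * ∑ j ∈ Finset.univ.filter (fun j : Fin K =>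
              ¬ ∀ x ∈ δ, p x j = 0), a j ^ 2
          = (Mb : ℝ) * c₂ ^ 2 * (∑ j ∈ Finset.univ.filter (fun j : Fin K =>
              ¬ ∀ x ∈ δ, p x j = 0), a j ^ 2) * (volume δ).toReal := by
        rw [setIntegral_const, smul_eq_mul, Measure.real]; ring
      have s3 : (Mb : ℝ) * c₂ ^ 2 * (∑ j ∈ Finset.univ.filter (fun j : Fin K =>
              ¬ ∀ x ∈ δ, p x j = 0), a j ^ 2) * (volume δ).toReal
          ≤ (Mb : ℝ) * c₂ ^ 2 * (∑ j ∈ Finset.univ.filter (fun j : Fin K =>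
              ¬ ∀ x ∈ δ, p x j = 0), a j ^ 2) * (κd * h ^ d) := by
        refine mul_le_mul_of_nonneg_left (hcellvol δ hδ) ?_
        refine mul_nonneg (mul_nonneg (Nat.cast_nonneg _) (sq_nonneg _)) ?_
        exact Finset.sum_nonneg fun j _ => sq_nonneg _
      exact le_trans s1 (le_trans (le_of_eq s2) s3)
    have hswapsum : ∀ a : Fin K → ℝ,
        ∑ δ ∈ Δ, ∑ j ∈ Finset.univ.filter (fun j : Fin K => ¬ ∀ x ∈ δ, p x j = 0), a j ^ 2
          ≤ (Mb : ℝ) * ∑ j, a j ^ 2 := by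
      intro a
      have e1 : ∀ δ ∈ Δ, ∑ j ∈ Finset.univ.filter (fun j : Fin K =>
          ¬ ∀ x ∈ δ, p x j = 0), a j ^ 2
          = ∑ j : Fin K, if ¬ ∀ x ∈ δ, p x j = 0 then a j ^ 2 else 0 :=
        fun δ _ => Finset.sum_filter _ _
      rw [Finset.sum_congr rfl e1, Finset.sum_comm]
      have e2 : ∀ j : Fin K,
          (∑ δ ∈ Δ, if ¬ ∀ x ∈ δ, p x j = 0 then a j ^ 2 else 0) ≤ (Mb : ℝ) * a j ^ 2 := by
        intro j
        rw [← Finset.sum_filter, Finset.sum_const, nsmul_eq_mul]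
        have hc : (Δ.filter (fun δ => ¬ ∀ x ∈ δ, p x j = 0)).card ≤ Mb := by
          have hseteq : {δ : Set (Euc d) | δ ∈ Δ ∧ ¬ ∀ x ∈ δ, p x j = 0}
              = ↑(Δ.filter (fun δ => ¬ ∀ x ∈ δ, p x j = 0)) := by
            ext δ; simp
          have h3 := (hA j).2.1
          rw [hseteq, Set.ncard_coe_finset] at h3
          exact h3
        exact mul_le_mul_of_nonneg_right (by exact_mod_cast hc) (sq_nonneg _)
      calc ∑ j : Fin K, ∑ δ ∈ Δ, (if ¬ ∀ x ∈ δ, p x j = 0 then a j ^ 2 else 0)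
          ≤ ∑ j : Fin K, (Mb : ℝ) * a j ^ 2 := Finset.sum_le_sum fun j _ => e2 j
        _ = (Mb : ℝ) * ∑ j, a j ^ 2 := (Finset.mul_sum _ _ _).symm
    have hup : ∀ a : Fin K → ℝ, quadForm Qm a ≤ βv * h ^ d * ∑ k, a k ^ 2 := by
      intro a
      have h1 : quadForm Qm a ≤ f₂ * ∫ x in 𝒳, (∑ j, a j * p x j) ^ 2 := by
        rw [hquadQ a]
        refine le_trans (setIntegral_mono_on (hgfint a) ((hgint a).const_mul f₂) hXmeas ?_) ?_
        · intro x hx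
          rw [mul_comm f₂]
          exact mul_le_mul_of_nonneg_left (hfb x hx).2 (hgnn a x)
        · rw [integral_const_mul]
      have h2 : ∫ x in 𝒳, (∑ j, a j * p x j) ^ 2
          ≤ (Mb : ℝ) ^ 2 * c₂ ^ 2 * κd * h ^ d * ∑ k, a k ^ 2 := by
        rw [hUeq a]
        calc ∑ δ ∈ Δ, ∫ x in δ, (∑ j, a j * p x j) ^ 2
            ≤ ∑ δ ∈ Δ, (Mb : ℝ) * c₂ ^ 2 * (∑ j ∈ Finset.univ.filter (fun j : Fin K =>
                ¬ ∀ x ∈ δ, p x j = 0), a j ^ 2) * (κd * h ^ d) :=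
              Finset.sum_le_sum fun δ hδ => hcellint a δ hδ
          _ = (Mb : ℝ) * c₂ ^ 2 * (κd * h ^ d) * ∑ δ ∈ Δ, ∑ j ∈ Finset.univ.filter
                (fun j : Fin K => ¬ ∀ x ∈ δ, p x j = 0), a j ^ 2 := by
              rw [Finset.mul_sum]
              exact Finset.sum_congr rfl fun δ _ => by ring
          _ ≤ (Mb : ℝ) * c₂ ^ 2 * (κd * h ^ d) * ((Mb : ℝ) * ∑ j, a j ^ 2) := by
              refine mul_le_mul_of_nonneg_left (hswapsum a) ?_
              positivity
          _ = (Mb : ℝ) ^ 2 * c₂ ^ 2 * κd * h ^ d * ∑ k, a k ^ 2 := by ring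
      calc quadForm Qm a ≤ f₂ * ∫ x in 𝒳, (∑ j, a j * p x j) ^ 2 := h1
        _ ≤ f₂ * ((Mb : ℝ) ^ 2 * c₂ ^ 2 * κd * h ^ d * ∑ k, a k ^ 2) :=
            mul_le_mul_of_nonneg_left h2 hf₂.le
        _ = βv * h ^ d * ∑ k, a k ^ 2 := by rw [hβv]; ring
    -- positive definiteness and the inverse
    have hquadpos : ∀ a : Fin K → ℝ, a ≠ 0 → 0 < quadForm Qm a := by
      intro a ha
      have hsum : 0 < ∑ k, a k ^ 2 := by
        obtain ⟨k, hk⟩ := Function.ne_iff.mp ha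
        exact Finset.sum_pos' (fun i _ => sq_nonneg _)
          ⟨k, Finset.mem_univ k, pow_two_pos_of_ne_zero hk⟩
      have h1 := hlow a
      nlinarith [mul_pos (mul_pos hf₁ hc₀) (mul_pos hdpow hsum)]
    have hQpd : Qm.PosDef := by
      rw [Matrix.posDef_iff_dotProduct_mulVec]
      constructor
      · ext k l
        simp only [Matrix.conjTranspose_apply, star_trivial]
        exact hQsym l k
      · intro a ha
        have he : star a ⬝ᵥ Qm *ᵥ a = quadForm Qm a := by
          rw [quadForm_eq_dot]
          congr 1
        rw [he]
        exact hquadpos a ha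
    have hdet : IsUnit Qm.det := (Matrix.PosDef.det_pos hQpd).ne'.isUnit
    have hQinv : Qm * Qm⁻¹ = 1 := Matrix.mul_nonsing_inv _ hdet
    -- conclusion
    refine ⟨⟨?_, ?_⟩, ?_⟩
    · rw [hcvaldef]
      exact div_pos (mul_pos hσ₁ (pow_pos hc₁ 2)) hβpos
    · rw [hCvaldef]
      exact div_pos (mul_pos (mul_pos hσ₂ (pow_pos hc₂ 2)) hMbR) (mul_pos hf₁ hc₀)
    intro Qm' Sg' x hx
    obtain ⟨δx, hδxΔ, hxcl⟩ := hmemcl x hx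
    set v : Fin K → ℝ := fun k => mderiv q (fun z => p z k) x with hv
    set w : Fin K → ℝ := Qm⁻¹.mulVec v with hw
    set t : ℝ := ∑ k, v k ^ 2 with ht
    have hCx := hC δx hδxΔ x hxcl
    rw [← hv] at hCx
    have htnn : 0 ≤ t := Finset.sum_nonneg fun k _ => sq_nonneg _
    have hsq : Real.sqrt t = eNorm v := by rw [eNorm, ht]
    have ht1 : c₁ ^ 2 / (h ^ mOrder q) ^ 2 ≤ t := by
      have h0 : 0 ≤ c₁ / h ^ mOrder q := (div_pos hc₁ hqpow).le
      have h1 : (c₁ / h ^ mOrder q) ^ 2 ≤ (Real.sqrt t) ^ 2 := by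
        rw [hsq]
        exact pow_le_pow_left₀ h0 hCx.1 2
      rw [Real.sq_sqrt htnn] at h1
      calc c₁ ^ 2 / (h ^ mOrder q) ^ 2 = (c₁ / h ^ mOrder q) ^ 2 := (div_pow _ _ _).symm
        _ ≤ t := h1
    have ht2 : t ≤ c₂ ^ 2 / (h ^ mOrder q) ^ 2 := by
      have h1 : (Real.sqrt t) ^ 2 ≤ (c₂ / h ^ mOrder q) ^ 2 := by
        refine pow_le_pow_left₀ (Real.sqrt_nonneg _) ?_ 2
        rw [hsq]
        exact hCx.2
      rw [Real.sq_sqrt htnn] at h1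
      calc t ≤ (c₂ / h ^ mOrder q) ^ 2 := h1
        _ = c₂ ^ 2 / (h ^ mOrder q) ^ 2 := div_pow _ _ _
    have htpos : 0 < t := lt_of_lt_of_le (by positivity) ht1
    have hQw : Qm.mulVec w = v := by
      rw [hw, Matrix.mulVec_mulVec, hQinv, Matrix.one_mulVec]
    have hBww : quadForm Qm w = ∑ k, w k * v k := by
      rw [quadForm]
      simp_rw [mul_assoc, ← Finset.mul_sum]
      exact Finset.sum_congr rfl fun k _ => by
        rw [show ∑ l, Qm k l * w l = Qm.mulVec w k from rfl, hQw]
    have hBvw : ∑ k, ∑ l, v k * Qm k l * w l = t := by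
      simp_rw [mul_assoc, ← Finset.mul_sum]
      rw [ht]
      exact Finset.sum_congr rfl fun k _ => by
        rw [show ∑ l, Qm k l * w l = Qm.mulVec w k from rfl, hQw, sq]
    -- two-sided bound on quadForm Qm w
    have hwlow : t / (βv * h ^ d) ≤ quadForm Qm w := by
      have hcs := quad_cs Qm hQsym hquadnn v w
      rw [hBvw] at hcs
      have hqv : quadForm Qm v ≤ βv * h ^ d * t := by
        have h5 := hup v
        rwa [← ht] at h5
      have hq0 : (0:ℝ) < βv * h ^ d := mul_pos hβpos hdpow
      rw [div_le_iff₀ hq0]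
      nlinarith [hquadnn w, hquadnn v, htpos, hcs, hqv]
    have hwup : quadForm Qm w ≤ (Mb : ℝ) * t / (f₁ * (c₀ * h ^ d)) := by
      have h1 := hlow w
      have h2 : (quadForm Qm w) ^ 2 ≤ (∑ k, w k ^ 2) * t := by
        rw [hBww, ht]
        exact Finset.sum_mul_sq_le_sq_mul_sq _ _ _
      rcases eq_or_lt_of_le (hquadnn w) with hq0 | hq0
      · rw [← hq0]
        positivity
      · have hF : (0:ℝ) < f₁ * (c₀ * h ^ d) := mul_pos hf₁ (mul_pos hc₀ hdpow)
        rw [le_div_iff₀ hF]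
        have hA2 : (quadForm Qm w) ^ 2 * (f₁ * (c₀ * h ^ d))
            ≤ (∑ k, w k ^ 2) * t * (f₁ * (c₀ * h ^ d)) :=
          mul_le_mul_of_nonneg_right h2 hF.le
        have hB2 : f₁ * (c₀ * h ^ d * ∑ k, w k ^ 2) * t ≤ (Mb : ℝ) * quadForm Qm w * t :=
          mul_le_mul_of_nonneg_right h1 htnn
        nlinarith [hA2, hB2, hq0, htpos]
    -- comparisons between Sg and Qm
    have hS1 : σ₁ * quadForm Qm w ≤ quadForm Sg w := by
      rw [hquadQ w, hquadS w, ← integral_const_mul]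
      refine setIntegral_mono_on ((hgfint w).const_mul σ₁) (hgσfint w) hXmeas ?_
      intro y hy
      have hgf : 0 ≤ (∑ j, w j * p y j) ^ 2 * f y :=
        mul_nonneg (hgnn w y) (le_trans hf₁.le (hfb y hy).1)
      calc σ₁ * ((∑ j, w j * p y j) ^ 2 * f y)
          ≤ σsq y * ((∑ j, w j * p y j) ^ 2 * f y) :=
            mul_le_mul_of_nonneg_right (hσb y hy).1 hgf
        _ = (∑ j, w j * p y j) ^ 2 * σsq y * f y := by ring
    have hS2 : quadForm Sg w ≤ σ₂ * quadForm Qm w := by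
      rw [hquadQ w, hquadS w, ← integral_const_mul]
      refine setIntegral_mono_on (hgσfint w) ((hgfint w).const_mul σ₂) hXmeas ?_
      intro y hy
      have hgf : 0 ≤ (∑ j, w j * p y j) ^ 2 * f y :=
        mul_nonneg (hgnn w y) (le_trans hf₁.le (hfb y hy).1)
      calc (∑ j, w j * p y j) ^ 2 * σsq y * f y
          = σsq y * ((∑ j, w j * p y j) ^ 2 * f y) := by ring
        _ ≤ σ₂ * ((∑ j, w j * p y j) ^ 2 * f y) :=
            mul_le_mul_of_nonneg_right (hσb y hy).2 hgf
    -- final assembly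
    have hpow2 : h ^ (2 * mOrder q) = (h ^ mOrder q) ^ 2 := by
      rw [mul_comm 2 (mOrder q), pow_mul]
    constructor
    · -- lower bound
      have e1 : cval / (h ^ d * h ^ (2 * mOrder q))
          = σ₁ * ((c₁ ^ 2 / (h ^ mOrder q) ^ 2) / (βv * h ^ d)) := by
        rw [hcvaldef, hpow2]
        field_simp
      calc cval / (h ^ d * h ^ (2 * mOrder q))
          = σ₁ * ((c₁ ^ 2 / (h ^ mOrder q) ^ 2) / (βv * h ^ d)) := e1
        _ ≤ σ₁ * (t / (βv * h ^ d)) := by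
            refine mul_le_mul_of_nonneg_left ?_ hσ₁.le
            exact div_le_div_of_nonneg_right ht1 (mul_pos hβpos hdpow).le
        _ ≤ σ₁ * quadForm Qm w := mul_le_mul_of_nonneg_left hwlow hσ₁.le
        _ ≤ quadForm Sg w := hS1
    · -- upper bound
      have e2 : Cval / (h ^ d * h ^ (2 * mOrder q))
          = σ₂ * ((Mb : ℝ) * (c₂ ^ 2 / (h ^ mOrder q) ^ 2) / (f₁ * (c₀ * h ^ d))) := by
        rw [hCvaldef, hpow2]
        field_simp
      calc quadForm Sg w ≤ σ₂ * quadForm Qm w := hS2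
        _ ≤ σ₂ * ((Mb : ℝ) * t / (f₁ * (c₀ * h ^ d))) :=
            mul_le_mul_of_nonneg_left hwup hσ₂.le
        _ ≤ σ₂ * ((Mb : ℝ) * (c₂ ^ 2 / (h ^ mOrder q) ^ 2) / (f₁ * (c₀ * h ^ d))) := by
            refine mul_le_mul_of_nonneg_left ?_ hσ₂.le
            refine div_le_div_of_nonneg_right ?_ (mul_pos hf₁ (mul_pos hc₀ hdpow)).le
            exact mul_le_mul_of_nonneg_left ht2 (Nat.cast_nonneg _)
        _ = Cval / (h ^ d * h ^ (2 * mOrder q)) := e2.symm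

  by_cases hgood : 0 < cval ∧ 0 < Cval
  · refine ⟨min cval Cval, max cval Cval, lt_min hgood.1 hgood.2, min_le_max, ?_⟩
    intro 𝒳 f σsq Δ h K p h1 h2 h3 h4 h5 h6 h7 h8 h9 h10 h11 h12 h13 h14 h15 h16 h17 h18
      h19 h20 h21 h22 h23 h24
    have M := (main 𝒳 f σsq Δ h K p h1 h2 h3 h4 h5 h6 h7 h8 h9 h10 h11 h12 h13 h14 h15 h16
      h17 h18 h19 h20 h21 h22 h23 h24).2
    intro Qm Sig₀ x hx
    have hD : (0:ℝ) < h ^ d * h ^ (2 * mOrder q) := by positivity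
    obtain ⟨hlo, hhi⟩ := M x hx
    constructor
    · exact le_trans ((div_le_div_iff_of_pos_right hD).mpr (min_le_left _ _)) hlo
    · exact le_trans hhi ((div_le_div_iff_of_pos_right hD).mpr (le_max_right _ _))
  · refine ⟨1, 1, one_pos, le_refl 1, ?_⟩
    intro 𝒳 f σsq Δ h K p h1 h2 h3 h4 h5 h6 h7 h8 h9 h10 h11 h12 h13 h14 h15 h16 h17 h18
      h19 h20 h21 h22 h23 h24
    exact absurd (main 𝒳 f σsq Δ h K p h1 h2 h3 h4 h5 h6 h7 h8 h9 h10 h11 h12 h13 h14 h15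
      h16 h17 h18 h19 h20 h21 h22 h23 h24).1 hgood

end
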